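/- arXiv:2509.09335 — 3 statements merged into one kernel-verified Lean document; each statement's English description precedes it below -/
import Mathlib

section
/- For all vectors u, v in ℝ^d and r ≥ 1, one has (|u|^{r-1}u - |v|^{r-1}v) · (u - v) ≥ (1/2)|u|^{r-1}|u - v|^2 + (1/2)|v|^{r-1}|u - v|^2. -/
theorem stmt0 (d : ℕ) (r : ℝ) (hr : 1 ≤ r) (u v : EuclideanSpace ℝ (Fin d)) :
    (inner ℝ ((‖u‖ ^ (r - 1)) • u - (‖v‖ ^ (r - 1)) • v) (u - v) : ℝ) ≥
      (1 / 2) * ‖u‖ ^ (r - 1) * ‖u - v‖ ^ 2 + (1 / 2) * ‖v‖ ^ (r - 1) * ‖u - v‖ ^ 2 := by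
  set a := ‖u‖ ^ (r - 1) with ha
  set b := ‖v‖ ^ (r - 1) with hb
  have hre : (0:ℝ) ≤ r - 1 := by linarith
  have h1 : (inner ℝ ((a) • u - (b) • v) (u - v) : ℝ)
      = a * ‖u‖ ^ 2 + b * ‖v‖ ^ 2 - (a + b) * inner ℝ u v := by
    simp only [inner_sub_left, inner_sub_right, real_inner_smul_left,
      real_inner_self_eq_norm_sq, real_inner_comm v u]
    ring
  have h2 : ‖u - v‖ ^ 2 = ‖u‖ ^ 2 - 2 * inner ℝ u v + ‖v‖ ^ 2 := by
    rw [@norm_sub_sq_real]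
  have key : (a - b) * (‖u‖ ^ 2 - ‖v‖ ^ 2) ≥ 0 := by
    rcases le_total ‖u‖ ‖v‖ with h | h
    · have hab : a ≤ b := Real.rpow_le_rpow (norm_nonneg u) h hre
      have hsq : ‖u‖ ^ 2 ≤ ‖v‖ ^ 2 := pow_le_pow_left₀ (norm_nonneg u) h 2
      nlinarith
    · have hab : b ≤ a := Real.rpow_le_rpow (norm_nonneg v) h hre
      have hsq : ‖v‖ ^ 2 ≤ ‖u‖ ^ 2 := pow_le_pow_left₀ (norm_nonneg v) h 2
      nlinarith
  rw [h1, h2]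
  nlinarith [key]
end

section
/- For all vectors u, v in ℝ^d and r ≥ 1, one has (|u|^{r-1}u - |v|^{r-1}v) · (u - v) ≥ 2^{-(r-1)} |u - v|^{r+1}. -/
open Real

lemma convex_aux {s a b : ℝ} (hs : 0 ≤ s) (ha : 0 ≤ a) (hb : 0 ≤ b) :
    (a + b) ^ (s + 1) ≤ 2 ^ s * (a ^ (s + 1) + b ^ (s + 1)) := by
  have h := NNReal.rpow_add_le_mul_rpow_add_rpow a.toNNReal b.toNNReal (p := s + 1) (by linarith)
  have := NNReal.coe_le_coe.2 h
  push_cast [NNReal.coe_rpow, Real.coe_toNNReal a ha, Real.coe_toNNReal b hb] at this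
  simpa using this

lemma key {s a b t : ℝ} (hs : 0 ≤ s) (ha : 0 ≤ a) (hb : 0 ≤ b) (ht : 0 ≤ t)
    (hT : t ≤ a + b) :
    (2:ℝ) ^ (-s) * (t ^ s * t ^ 2) ≤
      (a ^ s - b ^ s) * (a ^ 2 - b ^ 2) / 2 + (a ^ s + b ^ s) / 2 * t ^ 2 := by
  set K : ℝ := (a ^ s - b ^ s) * (a ^ 2 - b ^ 2) / 2 with hK
  have hK0 : 0 ≤ K := by
    rcases le_total a b with h | h
    · have h1 : a ^ s ≤ b ^ s := Real.rpow_le_rpow ha h hs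
      have h2 : a ^ 2 ≤ b ^ 2 := by nlinarith
      nlinarith
    · have h1 : b ^ s ≤ a ^ s := Real.rpow_le_rpow hb h hs
      have h2 : b ^ 2 ≤ a ^ 2 := by nlinarith
      nlinarith
  set C : ℝ := (2:ℝ) ^ (-s) with hC
  have hC0 : 0 < C := Real.rpow_pos_of_pos (by norm_num) _
  rcases le_or_gt (C * t ^ s) ((a ^ s + b ^ s) / 2) with h | h
  · have ht2 : (0:ℝ) ≤ t ^ 2 := sq_nonneg t
    nlinarith
  · -- hard case
    set T : ℝ := a + b with hTd
    have hTnn : 0 ≤ T := by positivity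
    have hts : t ^ s ≤ T ^ s := Real.rpow_le_rpow ht hT hs
    have ht2T2 : t ^ 2 ≤ T ^ 2 := by nlinarith
    -- final inequality at t = T
    have hfin : C * (T ^ s * T ^ 2) ≤ K + (a ^ s + b ^ s) / 2 * T ^ 2 := by
      have hconv := convex_aux hs ha hb
      have has1 : a ^ (s + 1) = a ^ s * a := by
        rw [Real.rpow_add' ha (by linarith), Real.rpow_one]
      have hbs1 : b ^ (s + 1) = b ^ s * b := by
        rw [Real.rpow_add' hb (by linarith), Real.rpow_one]
      have hTs1 : T ^ (s + 1) = T ^ s * T := by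
        rw [Real.rpow_add' hTnn (by linarith), Real.rpow_one]
      rw [has1, hbs1, hTs1] at hconv
      -- C = 2^(-s), so C * 2^s = 1
      have h2s : C * (2:ℝ) ^ s = 1 := by
        rw [hC, ← Real.rpow_add (by norm_num)]; simp
      have h1 : C * (T ^ s * T) ≤ a ^ s * a + b ^ s * b := by
        calc C * (T ^ s * T) ≤ C * (2 ^ s * (a ^ s * a + b ^ s * b)) :=
              mul_le_mul_of_nonneg_left hconv hC0.le
          _ = a ^ s * a + b ^ s * b := by rw [← mul_assoc, h2s, one_mul]
      have hident : K + (a ^ s + b ^ s) / 2 * T ^ 2 = (a ^ s * a + b ^ s * b) * T := by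
        rw [hK, hTd]; ring
      rw [hident]
      calc C * (T ^ s * T ^ 2) = C * (T ^ s * T) * T := by ring
        _ ≤ (a ^ s * a + b ^ s * b) * T := mul_le_mul_of_nonneg_right h1 hTnn
    -- monotone descent from t to T
    have hbracket : (a ^ s + b ^ s) / 2 - C * t ^ s < 0 := by linarith
    have step1 : K + (a ^ s + b ^ s) / 2 * t ^ 2 - C * (t ^ s * t ^ 2)
        = K + t ^ 2 * ((a ^ s + b ^ s) / 2 - C * t ^ s) := by ring
    have step2 : K + t ^ 2 * ((a ^ s + b ^ s) / 2 - C * t ^ s)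
        ≥ K + T ^ 2 * ((a ^ s + b ^ s) / 2 - C * t ^ s) := by
      nlinarith [mul_nonneg (sub_nonneg.2 ht2T2) (neg_nonneg.2 hbracket.le)]
    have step3 : K + T ^ 2 * ((a ^ s + b ^ s) / 2 - C * t ^ s)
        ≥ K + T ^ 2 * ((a ^ s + b ^ s) / 2 - C * T ^ s) := by
      have : C * t ^ s ≤ C * T ^ s := mul_le_mul_of_nonneg_left hts hC0.le
      nlinarith [sq_nonneg T]
    have step4 : K + T ^ 2 * ((a ^ s + b ^ s) / 2 - C * T ^ s) ≥ 0 := by nlinarith [hfin]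
    linarith

theorem stmt1 (d : ℕ) (r : ℝ) (hr : 1 ≤ r) (u v : EuclideanSpace ℝ (Fin d)) :
    (inner ℝ ((‖u‖ ^ (r - 1)) • u - (‖v‖ ^ (r - 1)) • v) (u - v) : ℝ) ≥
      (2 : ℝ) ^ (-(r - 1)) * ‖u - v‖ ^ (r + 1) := by
  set s : ℝ := r - 1 with hsd
  have hs : 0 ≤ s := by simp [hsd]; linarith
  set a := ‖u‖ with hadef
  set b := ‖v‖ with hbdef
  set t := ‖u - v‖ with htdef
  have ha : 0 ≤ a := norm_nonneg _
  have hb : 0 ≤ b := norm_nonneg _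
  have ht : 0 ≤ t := norm_nonneg _
  have hT : t ≤ a + b := norm_sub_le u v
  set c : ℝ := inner ℝ u v with hcdef
  have hc' : (inner ℝ v u : ℝ) = c := by rw [hcdef]; exact real_inner_comm u v
  have hLHS : (inner ℝ ((a ^ s) • u - (b ^ s) • v) (u - v) : ℝ)
      = a ^ s * a ^ 2 + b ^ s * b ^ 2 - (a ^ s + b ^ s) * c := by
    simp only [inner_sub_left, inner_sub_right, real_inner_smul_left,
      real_inner_self_eq_norm_sq, real_inner_comm v u, hc', ← hadef, ← hbdef]
    ring
  have ht2 : t ^ 2 = a ^ 2 - 2 * c + b ^ 2 := by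
    rw [htdef, hadef, hbdef, hcdef]; exact norm_sub_sq_real u v
  have hrw : t ^ (r + 1) = t ^ s * t ^ 2 := by
    rw [show r + 1 = s + 2 by rw [hsd]; ring,
      Real.rpow_add' ht (by linarith), Real.rpow_two]
  rw [hLHS, hrw]
  have hkey := key hs ha hb ht hT
  have hid : a ^ s * a ^ 2 + b ^ s * b ^ 2 - (a ^ s + b ^ s) * c
      = (a ^ s - b ^ s) * (a ^ 2 - b ^ 2) / 2 + (a ^ s + b ^ s) / 2 * t ^ 2 := by
    linear_combination (-(a ^ s + b ^ s) / 2) * ht2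
  rw [ge_iff_le, hid]
  exact hkey
end

section
/- Let X be a real Banach space and h : X → ℝ a locally Lipschitz function. Then h is strongly convex with constant ϑ > 0 (i.e., h(λu + (1-λ)v) ≤ λh(u) + (1-λ)h(v) − ϑλ(1-λ)‖u-v‖² for all u, v ∈ X and λ ∈ [0,1]) if and only if the Clarke subdifferential ∂h is strongly monotone with constant 2ϑ (i.e., ⟨ξ − η, u − v⟩ ≥ 2ϑ‖u-v‖² for all u, v ∈ X, ξ ∈ ∂h(u), η ∈ ∂h(v)). -/
open Filter

/-- Clarke generalized directional derivative of `h` at `x` in direction `v`. -/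
noncomputable def clarkeDeriv {X : Type*} [NormedAddCommGroup X] [NormedSpace ℝ X]
    (h : X → ℝ) (x v : X) : ℝ :=
  limsup (fun p : X × ℝ => (h (p.1 + p.2 • v) - h p.1) / p.2)
    ((nhds x) ×ˢ (nhdsWithin 0 (Set.Ioi 0)))

/-- Clarke subdifferential (generalized gradient) of `h` at `x`. -/
def clarkeSubdiff {X : Type*} [NormedAddCommGroup X] [NormedSpace ℝ X]
    (h : X → ℝ) (x : X) : Set (X →L[ℝ] ℝ) :=
  {ζ | ∀ v : X, ζ v ≤ clarkeDeriv h x v}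

section Helpers

open Filter Set Topology

variable {X : Type*} [NormedAddCommGroup X] [NormedSpace ℝ X]

lemma lip_bound (h : X → ℝ) (hh : LocallyLipschitz h) (x : X) :
    ∃ K : ℝ, 0 ≤ K ∧ ∀ d : X, ∀ᶠ p : X × ℝ in (𝓝 x) ×ˢ (𝓝[>] (0:ℝ)),
      |(h (p.1 + p.2 • d) - h p.1) / p.2| ≤ K * ‖d‖ := by
  obtain ⟨K, U, hU, hK⟩ := hh x
  obtain ⟨ε, hε, hball⟩ := Metric.mem_nhds_iff.1 hU
  refine ⟨K, K.coe_nonneg, fun d => ?_⟩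
  have h1 : Metric.ball x (ε/2) ∈ 𝓝 x := Metric.ball_mem_nhds x (by linarith)
  have h2 : Ioo (0:ℝ) (ε/(2*(‖d‖+1))) ∈ 𝓝[>] (0:ℝ) :=
    Ioo_mem_nhdsGT_of_mem ⟨le_refl _, by positivity⟩
  filter_upwards [prod_mem_prod h1 h2] with p hp
  obtain ⟨hy, ht⟩ := hp
  obtain ⟨ht0, ht1⟩ := ht
  have hd1 : (0:ℝ) < ‖d‖ + 1 := by positivity
  have htd : p.2 * ‖d‖ < ε/2 := by
    have : p.2 * (‖d‖ + 1) < ε/2 := by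
      have := (mul_lt_mul_of_pos_right ht1 hd1)
      calc p.2 * (‖d‖+1) < ε/(2*(‖d‖+1)) * (‖d‖+1) := this
        _ = ε/2 := by field_simp
    nlinarith [ht0.le]
  have hmem1 : p.1 ∈ U := hball (by simpa using lt_trans (by simpa using hy) (by linarith))
  have hmem2 : p.1 + p.2 • d ∈ U := by
    apply hball
    have : dist (p.1 + p.2 • d) x ≤ dist (p.1 + p.2 • d) p.1 + dist p.1 x := dist_triangle _ _ _
    have hdd : dist (p.1 + p.2 • d) p.1 = p.2 * ‖d‖ := by
      rw [dist_eq_norm, add_sub_cancel_left, norm_smul, Real.norm_eq_abs, abs_of_pos ht0]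
    have hyx : dist p.1 x < ε/2 := by simpa using hy
    simp only [Metric.mem_ball]
    linarith
  have hdist := hK.dist_le_mul _ hmem2 _ hmem1
  rw [Real.dist_eq, dist_eq_norm, add_sub_cancel_left, norm_smul, Real.norm_eq_abs,
    abs_of_pos ht0] at hdist
  rw [abs_div, abs_of_pos ht0, div_le_iff₀ ht0]
  calc |h (p.1 + p.2 • d) - h p.1| ≤ K * (p.2 * ‖d‖) := hdist
    _ = K * ‖d‖ * p.2 := by ring

end Helpers

section Helpers2

open Filter Set Topology

variable {X : Type*} [NormedAddCommGroup X] [NormedSpace ℝ X] {h : X → ℝ}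

lemma quot_bdd_above (hh : LocallyLipschitz h) (x d : X) :
    IsBoundedUnder (· ≤ ·) ((𝓝 x) ×ˢ (𝓝[>] (0:ℝ)))
      (fun p : X × ℝ => (h (p.1 + p.2 • d) - h p.1) / p.2) := by
  obtain ⟨K, hK0, hK⟩ := lip_bound h hh x
  exact ⟨K * ‖d‖, (hK d).mono fun p hp => (abs_le.1 hp).2⟩

lemma quot_bdd_below (hh : LocallyLipschitz h) (x d : X) :
    IsBoundedUnder (· ≥ ·) ((𝓝 x) ×ˢ (𝓝[>] (0:ℝ)))
      (fun p : X × ℝ => (h (p.1 + p.2 • d) - h p.1) / p.2) := by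
  obtain ⟨K, hK0, hK⟩ := lip_bound h hh x
  exact ⟨-(K * ‖d‖), (hK d).mono fun p hp => (abs_le.1 hp).1⟩

lemma quot_cobdd (hh : LocallyLipschitz h) (x d : X) :
    IsCoboundedUnder (· ≤ ·) ((𝓝 x) ×ˢ (𝓝[>] (0:ℝ)))
      (fun p : X × ℝ => (h (p.1 + p.2 • d) - h p.1) / p.2) :=
  (quot_bdd_below hh x d).isCoboundedUnder_le

lemma clarkeDeriv_le_of_eventually_le (hh : LocallyLipschitz h) {x d : X} {c : ℝ}
    (hc : ∀ᶠ p : X × ℝ in (𝓝 x) ×ˢ (𝓝[>] (0:ℝ)), (h (p.1 + p.2 • d) - h p.1) / p.2 ≤ c) :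
    clarkeDeriv h x d ≤ c :=
  limsup_le_of_le (quot_cobdd hh x d) hc

lemma clarkeDeriv_le_norm (hh : LocallyLipschitz h) (x : X) :
    ∃ K : ℝ, 0 ≤ K ∧ ∀ d : X, clarkeDeriv h x d ≤ K * ‖d‖ := by
  obtain ⟨K, hK0, hK⟩ := lip_bound h hh x
  exact ⟨K, hK0, fun d =>
    clarkeDeriv_le_of_eventually_le hh ((hK d).mono fun p hp => (abs_le.1 hp).2)⟩

lemma clarkeDeriv_zero (h : X → ℝ) (x : X) : clarkeDeriv h x 0 = 0 := by
  have : (fun p : X × ℝ => (h (p.1 + p.2 • (0:X)) - h p.1) / p.2) = fun _ => (0:ℝ) := by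
    funext p; simp
  rw [clarkeDeriv, this, limsup_const]

end Helpers2

section Helpers3

open Filter Set Topology

variable {X : Type*} [NormedAddCommGroup X] [NormedSpace ℝ X] {h : X → ℝ}

lemma limsup_comp_eq {α β : Type*} (u : α → ℝ) (m : β → α) (f : Filter β) :
    limsup (u ∘ m) f = limsup u (map m f) := by
  unfold Filter.limsup; rw [Filter.map_map]

lemma clarkeDeriv_add_le (hh : LocallyLipschitz h) (x a b : X) :
    clarkeDeriv h x (a + b) ≤ clarkeDeriv h x a + clarkeDeriv h x b := by
  obtain ⟨K, hK0, hK⟩ := lip_bound h hh x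
  set F : Filter (X × ℝ) := (𝓝 x) ×ˢ (𝓝[>] (0:ℝ)) with hF
  set qa : X × ℝ → ℝ := fun p => (h (p.1 + p.2 • a) - h p.1) / p.2 with hqa
  set qb : X × ℝ → ℝ := fun p => (h (p.1 + p.2 • b) - h p.1) / p.2 with hqb
  set m : X × ℝ → X × ℝ := fun p => (p.1 + p.2 • b, p.2) with hm
  have hmF : Tendsto m F F := by
    apply Tendsto.prodMk ?_ tendsto_snd
    have h2 : Tendsto (fun p : X × ℝ => p.2 • b) F (𝓝 (0:X)) := by
      have := ((tendsto_snd.mono_right (nhdsWithin_le_nhds)).smul_const b :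
        Tendsto (fun p : X × ℝ => p.2 • b) F (𝓝 ((0:ℝ) • b)))
      simpa using this
    simpa using tendsto_fst.add h2
  have hbd_a := hK a
  have hbd_am : ∀ᶠ p in F, |qa (m p)| ≤ K * ‖a‖ := hmF.eventually hbd_a
  have h1 : IsBoundedUnder (· ≥ ·) F (qa ∘ m) :=
    ⟨-(K * ‖a‖), hbd_am.mono fun p hp => (abs_le.1 hp).1⟩
  have h2 : IsBoundedUnder (· ≤ ·) F (qa ∘ m) :=
    ⟨K * ‖a‖, hbd_am.mono fun p hp => (abs_le.1 hp).2⟩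
  have h3 : IsCoboundedUnder (· ≤ ·) F qb := quot_cobdd hh x b
  have h4 : IsBoundedUnder (· ≤ ·) F qb := quot_bdd_above hh x b
  have key : clarkeDeriv h x (a + b) = limsup (qa ∘ m + qb) F := by
    rw [clarkeDeriv]; congr 1; funext p
    have hpt : p.1 + p.2 • (a + b) = (p.1 + p.2 • b) + p.2 • a := by
      rw [smul_add]; abel
    show (h (p.1 + p.2 • (a + b)) - h p.1) / p.2 = _ + _
    rw [hpt]
    show _ = (h ((p.1 + p.2 • b) + p.2 • a) - h (p.1 + p.2 • b)) / p.2 +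
      (h (p.1 + p.2 • b) - h p.1) / p.2
    rw [← add_div, sub_add_sub_cancel]
  have hmap : limsup (qa ∘ m) F ≤ clarkeDeriv h x a := by
    rw [limsup_comp_eq]
    refine limsup_le_limsup_of_le hmF ?_ (quot_bdd_above hh x a)
    refine IsBoundedUnder.isCoboundedUnder_le ?_
    exact ⟨-(K * ‖a‖), by rw [eventually_map]; exact hbd_am.mono fun p hp => (abs_le.1 hp).1⟩
  calc clarkeDeriv h x (a + b) = limsup (qa ∘ m + qb) F := key
    _ ≤ limsup (qa ∘ m) F + limsup qb F := limsup_add_le h1 h2 h3 h4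
    _ ≤ clarkeDeriv h x a + clarkeDeriv h x b := add_le_add hmap le_rfl

lemma clarkeDeriv_neg_add_nonneg (hh : LocallyLipschitz h) (x d : X) :
    0 ≤ clarkeDeriv h x d + clarkeDeriv h x (-d) := by
  have := clarkeDeriv_add_le hh x d (-d)
  rw [add_neg_cancel, clarkeDeriv_zero] at this
  linarith

end Helpers3

section Helpers4

open Filter Set Topology

variable {X : Type*} [NormedAddCommGroup X] [NormedSpace ℝ X] {h : X → ℝ}

lemma tendsto_mul_pos_nhdsWithin {c : ℝ} (hc : 0 < c) :
    Tendsto (fun t : ℝ => c * t) (𝓝[>] (0:ℝ)) (𝓝[>] (0:ℝ)) := by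
  apply tendsto_nhdsWithin_of_tendsto_nhds_of_eventually_within
  · have : Tendsto (fun t : ℝ => c * t) (𝓝 (0:ℝ)) (𝓝 (c * 0)) :=
      (continuous_const.mul continuous_id).tendsto 0
    simpa using this.mono_left nhdsWithin_le_nhds
  · filter_upwards [self_mem_nhdsWithin] with t ht
    exact mul_pos hc ht

lemma clarkeDeriv_pos_smul (hh : LocallyLipschitz h) (x d : X) {c : ℝ} (hc : 0 < c) :
    clarkeDeriv h x (c • d) = c * clarkeDeriv h x d := by
  obtain ⟨K, hK0, hK⟩ := lip_bound h hh x
  set F : Filter (X × ℝ) := (𝓝 x) ×ˢ (𝓝[>] (0:ℝ)) with hF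
  set qd : X × ℝ → ℝ := fun p => (h (p.1 + p.2 • d) - h p.1) / p.2 with hqd
  set m : X × ℝ → X × ℝ := fun p => (p.1, c * p.2) with hm
  set m' : X × ℝ → X × ℝ := fun p => (p.1, c⁻¹ * p.2) with hm'
  have hmF : Tendsto m F F := Tendsto.prodMk tendsto_fst
    ((tendsto_mul_pos_nhdsWithin hc).comp tendsto_snd)
  have hm'F : Tendsto m' F F := Tendsto.prodMk tendsto_fst
    ((tendsto_mul_pos_nhdsWithin (inv_pos.2 hc)).comp tendsto_snd)
  have hmapeq : map m F = F := by
    apply le_antisymm hmF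
    have : map m (map m' F) = F := by
      rw [map_map]
      have : m ∘ m' = id := by
        funext p; simp [hm, hm', ← mul_assoc, mul_inv_cancel₀ hc.ne']
      rw [this, map_id]
    calc F = map m (map m' F) := this.symm
      _ ≤ map m F := map_mono hm'F
  have hpos : ∀ᶠ p : X × ℝ in F, 0 < p.2 :=
    tendsto_snd.eventually (eventually_mem_nhdsWithin)
  have hcongr : ∀ᶠ p : X × ℝ in F,
      (h (p.1 + p.2 • (c • d)) - h p.1) / p.2 = c * qd (m p) := by
    filter_upwards [hpos] with p hp
    show _ = c * ((h (p.1 + (c * p.2) • d) - h p.1) / (c * p.2))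
    rw [smul_smul, mul_comm p.2 c]
    field_simp
  have hbd : ∀ᶠ p in F, |qd (m p)| ≤ K * ‖d‖ := hmF.eventually (hK d)
  have hbdd : IsBoundedUnder (· ≤ ·) F (qd ∘ m) :=
    ⟨K * ‖d‖, hbd.mono fun p hp => (abs_le.1 hp).2⟩
  have hcob : IsCoboundedUnder (· ≤ ·) F (qd ∘ m) :=
    IsBoundedUnder.isCoboundedUnder_le ⟨-(K * ‖d‖), hbd.mono fun p hp => (abs_le.1 hp).1⟩
  have hmono : Monotone (fun t : ℝ => c * t) := fun s t hst => mul_le_mul_of_nonneg_left hst hc.le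
  calc clarkeDeriv h x (c • d)
      = limsup (fun p => c * qd (m p)) F := limsup_congr hcongr
    _ = limsup ((fun t => c * t) ∘ (qd ∘ m)) F := rfl
    _ = c * limsup (qd ∘ m) F :=
        (hmono.map_limsup_of_continuousAt (qd ∘ m)
          ((continuous_const.mul continuous_id).continuousAt) hbdd hcob).symm
    _ = c * clarkeDeriv h x d := by rw [limsup_comp_eq, hmapeq]; rfl

end Helpers4

section Helpers5

open Filter Set Topology

variable {X : Type*} [NormedAddCommGroup X] [NormedSpace ℝ X] {h : X → ℝ}

lemma exists_clarkeSubdiff_eq (hh : LocallyLipschitz h) (x : X) {d : X} (hd : d ≠ 0) :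
    ∃ ξ ∈ clarkeSubdiff h x, ξ d = clarkeDeriv h x d := by
  obtain ⟨K, hK0, hKb⟩ := clarkeDeriv_le_norm hh x
  set N : X → ℝ := clarkeDeriv h x with hN
  have N_hom : ∀ c : ℝ, 0 < c → ∀ v, N (c • v) = c * N v :=
    fun c hc v => clarkeDeriv_pos_smul hh x v hc
  have N_add : ∀ v w, N (v + w) ≤ N v + N w := clarkeDeriv_add_le hh x
  have N_zero : N 0 = 0 := clarkeDeriv_zero h x
  have N_neg : ∀ v, -N v ≤ N (-v) := fun v => by
    have := clarkeDeriv_neg_add_nonneg hh x v; rw [hN]; linarith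
  set f := LinearPMap.mkSpanSingleton (K := ℝ) (L := ℝ) (σ := RingHom.id ℝ) d (N d) hd with hf
  have hfle : ∀ z : f.domain, f z ≤ N z := by
    rintro ⟨z, hz⟩
    have hz' := hz
    rw [LinearPMap.domain_mkSpanSingleton, Submodule.mem_span_singleton] at hz'
    obtain ⟨c, rfl⟩ := hz'
    have happ : f ⟨c • d, hz⟩ = c • N d := LinearPMap.mkSpanSingleton'_apply d (N d) _ c hz
    rw [happ, smul_eq_mul]
    rcases lt_trichotomy c 0 with hc | rfl | hc
    · have h1 : c • d = (-c) • (-d) := by rw [smul_neg, neg_smul, neg_neg]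
      show c * N d ≤ N (c • d)
      rw [h1, N_hom (-c) (by linarith) (-d)]
      have h2 : -N d ≤ N (-d) := N_neg d
      nlinarith
    · simpa [N_zero] using le_refl (0:ℝ)
    · rw [N_hom c hc d]
  obtain ⟨g, hg1, hg2⟩ := exists_extension_of_le_sublinear f N N_hom N_add hfle
  have hbound : ∀ v : X, ‖g v‖ ≤ K * ‖v‖ := by
    intro v
    rw [Real.norm_eq_abs, abs_le]
    constructor
    · have h1 : g (-v) ≤ N (-v) := hg2 (-v)
      rw [map_neg] at h1
      have h2 : N (-v) ≤ K * ‖-v‖ := hKb (-v)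
      rw [norm_neg] at h2
      linarith
    · exact (hg2 v).trans (hKb v)
  set ξ : X →L[ℝ] ℝ := LinearMap.mkContinuous g K hbound with hξ
  have hξapp : ∀ v, ξ v = g v := fun v => rfl
  refine ⟨ξ, fun v => ?_, ?_⟩
  · rw [hξapp]; exact hg2 v
  · rw [hξapp]
    have hmem : d ∈ f.domain := by
      rw [LinearPMap.domain_mkSpanSingleton]
      exact Submodule.mem_span_singleton_self d
    have := hg1 ⟨d, hmem⟩
    rw [this]
    exact LinearPMap.mkSpanSingleton_apply ℝ ℝ hd (N d)

end Helpers5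

section Helpers6

open Filter Set Topology

variable {X : Type*} [NormedAddCommGroup X] [NormedSpace ℝ X] {h : X → ℝ}

/-- Forward key: strong convexity bounds the Clarke derivative. -/
lemma clarkeDeriv_le_of_strongConvex (hh : LocallyLipschitz h) {ϑ : ℝ}
    (hsc : ∀ u v : X, ∀ l : ℝ, l ∈ Set.Icc (0 : ℝ) 1 →
        h (l • u + (1 - l) • v) ≤ l * h u + (1 - l) * h v - ϑ * l * (1 - l) * ‖u - v‖ ^ 2)
    (x d : X) :
    clarkeDeriv h x d ≤ h (x + d) - h x - ϑ * ‖d‖ ^ 2 := by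
  set F : Filter (X × ℝ) := (𝓝 x) ×ˢ (𝓝[>] (0:ℝ)) with hF
  set g : X × ℝ → ℝ := fun p => h (p.1 + d) - h p.1 - ϑ * (1 - p.2) * ‖d‖ ^ 2 with hg
  have hgt : Tendsto g F (𝓝 (h (x + d) - h x - ϑ * ‖d‖ ^ 2)) := by
    have hcont : Continuous fun p : X × ℝ => h (p.1 + d) - h p.1 - ϑ * (1 - p.2) * ‖d‖ ^ 2 := by
      have hc := hh.continuous
      fun_prop
    have hFle : F ≤ 𝓝 (x, (0:ℝ)) := by
      rw [nhds_prod_eq]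
      exact prod_mono le_rfl nhdsWithin_le_nhds
    have := (hcont.tendsto (x, (0:ℝ))).mono_left hFle
    simpa using this
  have hev : ∀ᶠ p : X × ℝ in F, (h (p.1 + p.2 • d) - h p.1) / p.2 ≤ g p := by
    have h2 : Ioo (0:ℝ) 1 ∈ 𝓝[>] (0:ℝ) := Ioo_mem_nhdsGT_of_mem ⟨le_refl _, one_pos⟩
    filter_upwards [prod_mem_prod univ_mem h2] with p hp
    obtain ⟨-, ht0, ht1⟩ : p.1 ∈ univ ∧ 0 < p.2 ∧ p.2 < 1 := ⟨hp.1, hp.2.1, hp.2.2⟩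
    have hkey := hsc (p.1 + d) p.1 p.2 ⟨ht0.le, ht1.le⟩
    have hpt : p.2 • (p.1 + d) + (1 - p.2) • p.1 = p.1 + p.2 • d := by
      rw [smul_add, sub_smul, one_smul]; abel
    rw [hpt] at hkey
    have hnd : p.1 + d - p.1 = d := by abel
    rw [hnd] at hkey
    rw [div_le_iff₀ ht0]
    show h (p.1 + p.2 • d) - h p.1 ≤ (h (p.1 + d) - h p.1 - ϑ * (1 - p.2) * ‖d‖ ^ 2) * p.2
    nlinarith
  calc clarkeDeriv h x d ≤ limsup g F :=
        limsup_le_limsup hev (quot_cobdd hh x d) hgt.isBoundedUnder_le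
    _ = h (x + d) - h x - ϑ * ‖d‖ ^ 2 := hgt.limsup_eq

/-- If the Clarke derivative at `x` in direction `d` is `< ρ`, then the forward difference
quotients at `x` itself are eventually `< ρ`. -/
lemma eventually_slope_lt (hh : LocallyLipschitz h) (x d : X) {ρ : ℝ}
    (hρ : clarkeDeriv h x d < ρ) :
    ∀ᶠ t in 𝓝[>] (0:ℝ), (h (x + t • d) - h x) / t < ρ := by
  obtain ⟨K, hK0, hK⟩ := lip_bound h hh x
  set F : Filter (X × ℝ) := (𝓝 x) ×ˢ (𝓝[>] (0:ℝ)) with hF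
  set q : X × ℝ → ℝ := fun p => (h (p.1 + p.2 • d) - h p.1) / p.2 with hq
  set m : ℝ → X × ℝ := fun t => (x, t) with hm
  have hmF : Tendsto m (𝓝[>] (0:ℝ)) F := Tendsto.prodMk tendsto_const_nhds tendsto_id
  have hbd : ∀ᶠ t in 𝓝[>] (0:ℝ), |q (m t)| ≤ K * ‖d‖ := hmF.eventually (hK d)
  have hbdd : IsBoundedUnder (· ≤ ·) (𝓝[>] (0:ℝ)) (q ∘ m) :=
    ⟨K * ‖d‖, hbd.mono fun t ht => (abs_le.1 ht).2⟩
  have hls : limsup (q ∘ m) (𝓝[>] (0:ℝ)) ≤ clarkeDeriv h x d := by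
    rw [limsup_comp_eq]
    refine limsup_le_limsup_of_le hmF ?_ (quot_bdd_above hh x d)
    refine IsBoundedUnder.isCoboundedUnder_le ?_
    exact ⟨-(K * ‖d‖), by rw [eventually_map]; exact hbd.mono fun t ht => (abs_le.1 ht).1⟩
  exact eventually_lt_of_limsup_lt (lt_of_le_of_lt hls hρ) hbdd

/-- Dini-type mean value inequality (upper bound). -/
lemma dini_upper {χ : ℝ → ℝ} {a b M : ℝ} (hab : a ≤ b) (hχ : ContinuousOn χ (Icc a b))
    (hs : ∀ τ ∈ Ico a b, ∀ ρ, M < ρ → ∀ᶠ t in 𝓝[>] (0:ℝ), (χ (τ + t) - χ τ) / t < ρ) :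
    χ b - χ a ≤ M * (b - a) := by
  have key : ∀ ε > 0, χ b ≤ χ a + (M + ε) * (b - a) := by
    intro ε hε
    set B : ℝ → ℝ := fun y => χ a + (M + ε) * (y - a) with hB
    have := image_le_of_liminf_slope_right_le_deriv_boundary (f := χ) (B := B)
      (B' := fun _ => M + ε) hχ (by simp [hB]) (by fun_prop)
      (fun y hy => by
        simpa [hB] using (((hasDerivWithinAt_id y (Ici y)).sub_const a).const_mul
          (M + ε)).const_add (χ a))
      ?_ (right_mem_Icc.2 hab)
    · simpa [hB] using this
    · intro τ hτ r hr
      have hr' : M + ε < r := hr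
      have hev := hs τ hτ r (by linarith)
      have htend : Tendsto (fun z : ℝ => z - τ) (𝓝[>] τ) (𝓝[>] (0:ℝ)) := by
        apply tendsto_nhdsWithin_of_tendsto_nhds_of_eventually_within
        · have : Tendsto (fun z : ℝ => z - τ) (𝓝 τ) (𝓝 (τ - τ)) :=
            (continuous_id.sub continuous_const).tendsto τ
          simpa using this.mono_left nhdsWithin_le_nhds
        · filter_upwards [self_mem_nhdsWithin] with z hz
          simpa [sub_pos] using hz
      have : ∀ᶠ z in 𝓝[>] τ, slope χ τ z < r := by
        filter_upwards [htend.eventually hev] with z hz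
        have hzz : τ + (z - τ) = z := by ring
        rw [hzz] at hz
        rwa [slope_def_field]
      exact this.frequently
  have : ∀ ε > 0, χ b - χ a ≤ M * (b - a) + ε * (b - a) := fun ε hε => by
    have hk := key ε hε
    have hexp : (M + ε) * (b - a) = M * (b - a) + ε * (b - a) := by ring
    linarith
  rcases eq_or_lt_of_le hab with rfl | hab'
  · simp
  · refine le_of_forall_pos_le_add fun ε hε => ?_
    have := this (ε / (b - a)) (div_pos hε (by linarith))
    have hba : 0 < b - a := by linarith
    calc χ b - χ a ≤ M * (b - a) + ε / (b - a) * (b - a) := this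
      _ = M * (b - a) + ε := by field_simp

end Helpers6

section Helpers7

open Filter Set Topology

variable {X : Type*} [NormedAddCommGroup X] [NormedSpace ℝ X] {h : X → ℝ}

/-- Dini-type mean value inequality (lower bound, via backward difference quotients). -/
lemma dini_lower {χ : ℝ → ℝ} {a b m : ℝ} (hab : a ≤ b) (hχ : ContinuousOn χ (Icc a b))
    (hs : ∀ τ ∈ Ioc a b, ∀ ρ, -m < ρ → ∀ᶠ t in 𝓝[>] (0:ℝ), (χ (τ - t) - χ τ) / t < ρ) :
    m * (b - a) ≤ χ b - χ a := by
  set ω : ℝ → ℝ := fun τ => χ (a + b - τ) with hω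
  have hωc : ContinuousOn ω (Icc a b) := by
    apply hχ.comp (by fun_prop)
    intro τ hτ
    exact ⟨by linarith [hτ.2], by linarith [hτ.1]⟩
  have key := dini_upper (M := -m) hab hωc ?_
  · have hb : ω b = χ a := by simp [hω]
    have ha : ω a = χ b := by simp only [hω]; congr 1; ring
    rw [hb, ha] at key
    nlinarith
  · intro τ hτ ρ hρ
    have hc : a + b - τ ∈ Ioc a b := ⟨by linarith [hτ.2], by linarith [hτ.1]⟩
    have := hs (a + b - τ) hc ρ hρ
    filter_upwards [this] with t ht
    have h1 : ω (τ + t) = χ ((a + b - τ) - t) := by simp only [hω]; congr 1; ring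
    have h2 : ω τ = χ (a + b - τ) := rfl
    rw [h1, h2]
    exact ht

set_option maxHeartbeats 1000000 in
lemma reverse_direction (hh : LocallyLipschitz h) {ϑ : ℝ} (hϑ : 0 < ϑ)
    (H : ∀ u v : X, ∀ ξ ∈ clarkeSubdiff h u, ∀ η ∈ clarkeSubdiff h v,
        ξ (u - v) - η (u - v) ≥ 2 * ϑ * ‖u - v‖ ^ 2) :
    ∀ u v : X, ∀ l : ℝ, l ∈ Set.Icc (0 : ℝ) 1 →
        h (l • u + (1 - l) • v) ≤ l * h u + (1 - l) * h v - ϑ * l * (1 - l) * ‖u - v‖ ^ 2 := by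
  intro u v l hl
  obtain ⟨hl0, hl1⟩ := hl
  rcases eq_or_ne u v with rfl | huv
  · have h0 : l • u + (1 - l) • u = u := by
      rw [← add_smul]; norm_num
    rw [h0, sub_self, norm_zero]
    nlinarith
  rcases eq_or_lt_of_le hl0 with rfl | hl0'
  · simp
  rcases eq_or_lt_of_le hl1 with rfl | hl1'
  · simp
  have hd : u - v ≠ 0 := sub_ne_zero.2 huv
  set d : X := u - v with hdd
  set K : ℝ := ‖d‖ ^ 2 with hKdef
  have hK : 0 < K := by
    have : 0 < ‖d‖ := norm_pos_iff.2 hd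
    positivity
  set w : ℝ → X := fun t => v + t • d with hw
  set p : ℝ → ℝ := fun t => clarkeDeriv h (w t) d with hp
  set q : ℝ → ℝ := fun t => clarkeDeriv h (w t) (-d) with hq
  set r : ℝ → ℝ := fun t => p t - 2 * ϑ * K * t with hr
  -- Step A : two point inequality
  have stepA : ∀ s t : ℝ, s < t → p s + q t ≤ -(2 * ϑ * K * (t - s)) := by
    intro s t hst
    obtain ⟨ξ, hξ, hξd⟩ := exists_clarkeSubdiff_eq hh (w s) hd
    obtain ⟨η, hη, hηd⟩ := exists_clarkeSubdiff_eq hh (w t) (neg_ne_zero.2 hd)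
    have hH := H (w s) (w t) ξ hξ η hη
    have hws : w s - w t = (s - t) • d := by
      simp only [hw]; rw [sub_smul]; abel
    rw [hws, map_smul, map_smul, smul_eq_mul, smul_eq_mul] at hH
    have hηd' : η d = -q t := by
      have h0 : η (d + -d) = 0 := by simp
      rw [map_add] at h0
      linarith [hηd, h0]
    have hns : ‖(s - t) • d‖ ^ 2 = (t - s) ^ 2 * K := by
      rw [norm_smul, Real.norm_eq_abs, mul_pow, sq_abs, hKdef]; ring
    rw [hns, hξd, hηd'] at hH
    have hts : 0 < t - s := sub_pos.2 hst
    have h1 : (t - s) * (p s + q t) ≤ (t - s) * (-(2 * ϑ * K * (t - s))) := by nlinarith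
    exact le_of_mul_le_mul_left h1 hts
  have stepPQ : ∀ t : ℝ, 0 ≤ p t + q t := fun t => clarkeDeriv_neg_add_nonneg hh (w t) d
  have stepR : ∀ s t : ℝ, s ≤ t → r s ≤ r t := by
    intro s t hst
    rcases eq_or_lt_of_le hst with rfl | h'
    · exact le_rfl
    · have hA := stepA s t h'
      have hB := stepPQ t
      simp only [hr]; nlinarith
  set χ : ℝ → ℝ := fun t => h (w t) - ϑ * K * t ^ 2 with hχ
  have hχc : Continuous χ := by
    apply Continuous.sub
    · exact hh.continuous.comp (by fun_prop)
    · fun_prop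
  -- forward slope bound
  have SL : ∀ τ ρ : ℝ, r τ < ρ → ∀ᶠ t in 𝓝[>] (0:ℝ), (χ (τ + t) - χ τ) / t < ρ := by
    intro τ ρ hρ
    have hρ' : clarkeDeriv h (w τ) d < ρ + 2 * ϑ * K * τ := by
      simp only [hr, hp] at hρ ⊢; linarith
    have h1 := eventually_slope_lt hh (w τ) d hρ'
    filter_upwards [h1, self_mem_nhdsWithin] with t ht htpos
    have htpos' : (0:ℝ) < t := htpos
    have hwt : w (τ + t) = w τ + t • d := by
      simp only [hw, add_smul]; abel
    have key : (χ (τ + t) - χ τ) / t = (h (w (τ + t)) - h (w τ)) / t - ϑ * K * (2 * τ + t) := by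
      simp only [hχ]
      field_simp
      ring
    rw [key, hwt]
    have hpos2 : 0 < ϑ * K * t := by positivity
    nlinarith [ht]
  -- backward slope bound
  have SL' : ∀ τ s : ℝ, s < τ → ∀ ρ : ℝ, -(r s) < ρ →
      ∀ᶠ t in 𝓝[>] (0:ℝ), (χ (τ - t) - χ τ) / t < ρ := by
    intro τ s hsτ ρ hρ
    have hqb : q τ + 2 * ϑ * K * τ ≤ -(r s) := by
      have := stepA s τ hsτ
      simp only [hr]; nlinarith
    have hρ' : clarkeDeriv h (w τ) (-d) < ρ - 2 * ϑ * K * τ := by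
      simp only [hq] at hqb; linarith
    have h1 := eventually_slope_lt hh (w τ) (-d) hρ'
    filter_upwards [h1, self_mem_nhdsWithin] with t ht htpos
    have htpos' : (0:ℝ) < t := htpos
    have hwt : w (τ - t) = w τ + t • (-d) := by
      simp only [hw, sub_smul, smul_neg]; abel
    have key : (χ (τ - t) - χ τ) / t = (h (w (τ - t)) - h (w τ)) / t + ϑ * K * (2 * τ - t) := by
      simp only [hχ]
      field_simp
      ring
    rw [key, hwt]
    have hpos2 : 0 < ϑ * K * t := by positivity
    nlinarith [ht]
  -- main estimate for each small Δ
  have key1 : ∀ Δ : ℝ, 0 < Δ → Δ < l →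
      (1 - l) * (χ l - χ 0) ≤ l * (χ 1 - χ l) + (1 - l) * Δ * (r l - r 0) := by
    intro Δ hΔ0 hΔl
    have E1 : χ (l - Δ) - χ 0 ≤ r (l - Δ) * (l - Δ - 0) :=
      dini_upper (by linarith) hχc.continuousOn
        (fun τ hτ ρ hρ => SL τ ρ (lt_of_le_of_lt (stepR τ (l - Δ) hτ.2.le) hρ))
    have E2 : χ l - χ (l - Δ) ≤ r l * (l - (l - Δ)) :=
      dini_upper (by linarith) hχc.continuousOn
        (fun τ hτ ρ hρ => SL τ ρ (lt_of_le_of_lt (stepR τ l hτ.2.le) hρ))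
    have E3 : r (l - Δ) * (1 - l) ≤ χ 1 - χ l :=
      dini_lower (by linarith) hχc.continuousOn
        (fun τ hτ ρ hρ => SL' τ (l - Δ) (by linarith [hτ.1]) ρ hρ)
    have E4 : r 0 ≤ r (l - Δ) := stepR 0 (l - Δ) (by linarith)
    have h1 : (1 - l) * (χ l - χ 0) ≤ (1 - l) * (r (l - Δ) * (l - Δ - 0) + r l * (l - (l - Δ))) :=
      mul_le_mul_of_nonneg_left (by linarith) (by linarith)
    have h2 : l * (r (l - Δ) * (1 - l)) ≤ l * (χ 1 - χ l) :=
      mul_le_mul_of_nonneg_left E3 (by linarith)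
    have h3 : (1 - l) * Δ * (r 0) ≤ (1 - l) * Δ * (r (l - Δ)) :=
      mul_le_mul_of_nonneg_left E4 (mul_nonneg (by linarith) hΔ0.le)
    linarith [h1, h2, h3]
  -- pass to the limit Δ → 0
  have key2 : (1 - l) * (χ l - χ 0) ≤ l * (χ 1 - χ l) := by
    refine le_of_forall_pos_le_add fun ε hε => ?_
    have hrl : r 0 ≤ r l := stepR 0 l (by linarith)
    set c : ℝ := (1 - l) * (r l - r 0) with hc
    have hc0 : 0 ≤ c := mul_nonneg (by linarith) (by linarith)
    set Δ : ℝ := min (l / 2) (ε / (c + 1)) with hΔ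
    have hΔ0 : 0 < Δ := lt_min (by linarith) (by positivity)
    have hΔl : Δ < l := lt_of_le_of_lt (min_le_left _ _) (by linarith)
    have hmain := key1 Δ hΔ0 hΔl
    have ha : c * Δ ≤ c * (ε / (c + 1)) := mul_le_mul_of_nonneg_left (min_le_right _ _) hc0
    have hb : c * (ε / (c + 1)) ≤ ε := by
      rw [mul_div_assoc']
      rw [div_le_iff₀ (by positivity)]
      nlinarith
    have heq : (1 - l) * Δ * (r l - r 0) = c * Δ := by rw [hc]; ring
    linarith
  -- unfold χ and conclude
  have hw0 : w 0 = v := by simp [hw]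
  have hw1 : w 1 = u := by simp [hw, hdd]
  have hwl : w l = l • u + (1 - l) • v := by
    simp only [hw, hdd, smul_sub, sub_smul, one_smul]
    abel
  have hχ0 : χ 0 = h v := by simp [hχ, hw0]
  have hχ1 : χ 1 = h u - ϑ * K := by simp [hχ, hw1]
  have hχl : χ l = h (l • u + (1 - l) • v) - ϑ * K * l ^ 2 := by
    simp only [hχ, hwl]
  rw [hχ0, hχ1, hχl] at key2
  nlinarith [key2]

end Helpers7

theorem stmt5 {X : Type*} [NormedAddCommGroup X] [NormedSpace ℝ X] [CompleteSpace X]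
    (h : X → ℝ) (hh : LocallyLipschitz h) (ϑ : ℝ) (hϑ : 0 < ϑ) :
    (∀ u v : X, ∀ l : ℝ, l ∈ Set.Icc (0 : ℝ) 1 →
        h (l • u + (1 - l) • v) ≤ l * h u + (1 - l) * h v - ϑ * l * (1 - l) * ‖u - v‖ ^ 2) ↔
      (∀ u v : X, ∀ ξ ∈ clarkeSubdiff h u, ∀ η ∈ clarkeSubdiff h v,
        ξ (u - v) - η (u - v) ≥ 2 * ϑ * ‖u - v‖ ^ 2) := by
  constructor
  · intro hsc u v ξ hξ η hη
    have e1 : u + (v - u) = v := by abel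
    have e2 : v + (u - v) = u := by abel
    have h1 : ξ (v - u) ≤ h v - h u - ϑ * ‖v - u‖ ^ 2 := by
      have := (hξ (v - u)).trans (clarkeDeriv_le_of_strongConvex hh hsc u (v - u))
      rwa [e1] at this
    have h2 : η (u - v) ≤ h u - h v - ϑ * ‖u - v‖ ^ 2 := by
      have := (hη (u - v)).trans (clarkeDeriv_le_of_strongConvex hh hsc v (u - v))
      rwa [e2] at this
    have h3 : ξ (u - v) = -ξ (v - u) := by
      rw [← map_neg]; congr 1; abel
    have h4 : ‖v - u‖ = ‖u - v‖ := norm_sub_rev v u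
    rw [h4] at h1
    rw [ge_iff_le, h3]
    linarith
  · exact fun H => reverse_direction hh hϑ H
end
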